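/- In the Menelaus sequent system, every derivable sequent can be derived by a normal derivation, i.e. a derivation in which no application of a cut rule is preceded by an application of ⊓-introduction or ↔-introduction. -/
import Mathlib


/-- Formulae of the Menelaus system over a set `W` of letters: atomic formulae are
sextuples of mutually distinct letters, compound formulae use the connectives `⊓`
(`conj`) and `↔` (`equ`). -/
inductive MFormula (W : Type*) : Type _
  | atom : {f : Fin 6 → W // Function.Injective f} → MFormula W
  | conj : MFormula W → MFormula W → MFormula W
  | equ : MFormula W → MFormula W → MFormula W

/-- Derivability in the Menelaus system, with axiomatic sequents taken from an
arbitrary set `Ax` of atomic sequents (multisets of atomic formulae).  Rules: the two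
cut rules, `⊓`-introduction and `↔`-introduction. -/
inductive MDeriv {W : Type*} (Ax : Set (Multiset {f : Fin 6 → W // Function.Injective f})) :
    Multiset (MFormula W) → Prop
  | ax {Γ} : Γ ∈ Ax → MDeriv Ax (Γ.map MFormula.atom)
  | cut {φ Γ Δ} : MDeriv Ax (φ ::ₘ Γ) → MDeriv Ax (φ ::ₘ Δ) → MDeriv Ax (Γ + Δ)
  | mix {Γ Δ} : MDeriv Ax Γ → MDeriv Ax Δ → MDeriv Ax (Γ + Δ)
  | conj {φ ψ Γ} : MDeriv Ax (φ ::ₘ Γ) → MDeriv Ax (ψ ::ₘ Γ) →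
      MDeriv Ax (MFormula.conj φ ψ ::ₘ Γ)
  | equ {φ ψ Γ Δ} : MDeriv Ax (φ ::ₘ Γ) → MDeriv Ax (ψ ::ₘ Δ) →
      MDeriv Ax (MFormula.equ φ ψ ::ₘ (Γ + Δ))

/-- Sequents derivable from the axioms using the cut rules only. -/
inductive MDerivCut {W : Type*} (Ax : Set (Multiset {f : Fin 6 → W // Function.Injective f})) :
    Multiset (MFormula W) → Prop
  | ax {Γ} : Γ ∈ Ax → MDerivCut Ax (Γ.map MFormula.atom)
  | cut {φ Γ Δ} : MDerivCut Ax (φ ::ₘ Γ) → MDerivCut Ax (φ ::ₘ Δ) → MDerivCut Ax (Γ + Δ)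
  | mix {Γ Δ} : MDerivCut Ax Γ → MDerivCut Ax Δ → MDerivCut Ax (Γ + Δ)

/-- Sequents having a *normal* derivation: a derivation in which no cut is preceded by
an introduction rule, i.e. all cuts are performed first (on sequents derived from the
axioms by cuts alone) and the introduction rules are applied afterwards. -/
inductive MDerivNormal {W : Type*}
    (Ax : Set (Multiset {f : Fin 6 → W // Function.Injective f})) :
    Multiset (MFormula W) → Prop
  | base {Γ} : MDerivCut Ax Γ → MDerivNormal Ax Γ
  | conj {φ ψ Γ} : MDerivNormal Ax (φ ::ₘ Γ) → MDerivNormal Ax (ψ ::ₘ Γ) →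
      MDerivNormal Ax (MFormula.conj φ ψ ::ₘ Γ)
  | equ {φ ψ Γ Δ} : MDerivNormal Ax (φ ::ₘ Γ) → MDerivNormal Ax (ψ ::ₘ Δ) →
      MDerivNormal Ax (MFormula.equ φ ψ ::ₘ (Γ + Δ))

namespace MenelausAux

variable {W : Type*} {Ax : Set (Multiset {f : Fin 6 → W // Function.Injective f})}

lemma cutonly_atoms {Γ} (h : MDerivCut Ax Γ) :
    ∀ x ∈ Γ, ∃ a, x = MFormula.atom a := by
  induction h with
  | ax _ =>
    intro x hx
    rcases Multiset.mem_map.1 hx with ⟨a, _, rfl⟩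
    exact ⟨a, rfl⟩
  | cut _ _ ih1 ih2 =>
    intro x hx
    rcases Multiset.mem_add.1 hx with h | h
    · exact ih1 x (Multiset.mem_cons_of_mem h)
    · exact ih2 x (Multiset.mem_cons_of_mem h)
  | mix _ _ ih1 ih2 =>
    intro x hx
    rcases Multiset.mem_add.1 hx with h | h
    exacts [ih1 x h, ih2 x h]

lemma normal_congr {Γ Δ : Multiset (MFormula W)} (h : MDerivNormal Ax Γ)
    (e : Γ = Δ) : MDerivNormal Ax Δ := e ▸ h

lemma mix_normal {Γ Δ : Multiset (MFormula W)} (h1 : MDerivNormal Ax Γ)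
    (h2 : MDerivNormal Ax Δ) : MDerivNormal Ax (Γ + Δ) := by
  induction h1 generalizing Δ with
  | base hc =>
    induction h2 with
    | base hd => exact .base (hc.mix hd)
    | conj hφ hψ ihφ ihψ =>
      rw [Multiset.add_cons]
      rw [Multiset.add_cons] at ihφ ihψ
      exact .conj ihφ ihψ
    | equ hφ hψ ihφ ihψ =>
      rw [Multiset.add_cons] at ihφ
      exact normal_congr (MDerivNormal.equ ihφ hψ)
        (by rw [Multiset.add_cons]; congr 1; abel)
  | conj hφ hψ ihφ ihψ =>
    rw [Multiset.cons_add]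
    have a := ihφ h2; have b := ihψ h2
    rw [Multiset.cons_add] at a b
    exact .conj a b
  | equ hφ hψ ihφ ihψ =>
    have a := ihφ h2
    rw [Multiset.cons_add] at a
    exact normal_congr (MDerivNormal.equ a hψ)
      (by rw [Multiset.cons_add]; congr 1; abel)

/-- Right commutation of a cut over a normal derivation. -/
lemma cut_right (φ : MFormula W) (Γ : Multiset (MFormula W))
    (hbase : ∀ {Δ}, MDerivCut Ax (φ ::ₘ Δ) → MDerivNormal Ax (Γ + Δ))
    (hconj : ∀ {χ ξ Δ}, φ = MFormula.conj χ ξ → MDerivNormal Ax (χ ::ₘ Δ) →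
        MDerivNormal Ax (ξ ::ₘ Δ) → MDerivNormal Ax (Γ + Δ))
    (hequ : ∀ {χ ξ Δ₁ Δ₂}, φ = MFormula.equ χ ξ → MDerivNormal Ax (χ ::ₘ Δ₁) →
        MDerivNormal Ax (ξ ::ₘ Δ₂) → MDerivNormal Ax (Γ + (Δ₁ + Δ₂))) :
    ∀ {Δ}, MDerivNormal Ax (φ ::ₘ Δ) → MDerivNormal Ax (Γ + Δ) := by
  suffices key : ∀ {Θ}, MDerivNormal Ax Θ → ∀ Δ, Θ = φ ::ₘ Δ → MDerivNormal Ax (Γ + Δ) by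
    intro Δ h; exact key h Δ rfl
  intro Θ h
  induction h with
  | base hc =>
    intro Δ hΘ
    exact hbase (hΘ ▸ hc)
  | conj hχ hξ ihχ ihξ =>
    intro Δ hΘ
    rcases Multiset.cons_eq_cons.1 hΘ with ⟨hf, rfl⟩ | ⟨-, u, hΔ₀, rfl⟩
    · exact hconj hf.symm hχ hξ
    · have a := ihχ _ (by rw [hΔ₀, Multiset.cons_swap])
      have b := ihξ _ (by rw [hΔ₀, Multiset.cons_swap])
      rw [Multiset.add_cons] at a b
      rw [Multiset.add_cons]
      exact .conj a b
  | equ hχ hξ ihχ ihξ =>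
    intro Δ hΘ
    rcases Multiset.cons_eq_cons.1 hΘ with ⟨hf, h12⟩ | ⟨-, u, h12, rfl⟩
    · rw [← h12]; exact hequ hf.symm hχ hξ
    · rcases Multiset.mem_add.1
        (show φ ∈ _ by rw [h12]; exact Multiset.mem_cons_self _ _) with hm | hm
      · obtain ⟨v, rfl⟩ := Multiset.exists_cons_of_mem hm
        have hu : u = v + _ := (Multiset.cons_inj_right φ).1
          (by rw [← h12, Multiset.cons_add])
        have a := ihχ _ (Multiset.cons_swap _ _ _)
        rw [Multiset.add_cons] at a
        exact normal_congr (MDerivNormal.equ a hξ)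
          (by rw [hu, Multiset.add_cons]; congr 1; abel)
      · obtain ⟨v, rfl⟩ := Multiset.exists_cons_of_mem hm
        have hu : u = _ + v := (Multiset.cons_inj_right φ).1
          (by rw [← h12, Multiset.add_cons])
        have a := ihξ _ (Multiset.cons_swap _ _ _)
        rw [Multiset.add_cons] at a
        exact normal_congr (MDerivNormal.equ hχ a)
          (by rw [hu, Multiset.add_cons]; congr 1; abel)

/-- Left commutation of a cut over a normal derivation. -/
lemma cut_left (φ : MFormula W)
    (hbase : ∀ {Γ Δ}, MDerivCut Ax (φ ::ₘ Γ) → MDerivNormal Ax (φ ::ₘ Δ) →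
        MDerivNormal Ax (Γ + Δ))
    (hconj : ∀ {χ ξ Γ Δ}, φ = MFormula.conj χ ξ → MDerivNormal Ax (χ ::ₘ Γ) →
        MDerivNormal Ax (ξ ::ₘ Γ) → MDerivNormal Ax (φ ::ₘ Δ) → MDerivNormal Ax (Γ + Δ))
    (hequ : ∀ {χ ξ Γ₁ Γ₂ Δ}, φ = MFormula.equ χ ξ → MDerivNormal Ax (χ ::ₘ Γ₁) →
        MDerivNormal Ax (ξ ::ₘ Γ₂) → MDerivNormal Ax (φ ::ₘ Δ) →
        MDerivNormal Ax ((Γ₁ + Γ₂) + Δ)) :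
    ∀ {Γ Δ}, MDerivNormal Ax (φ ::ₘ Γ) → MDerivNormal Ax (φ ::ₘ Δ) →
      MDerivNormal Ax (Γ + Δ) := by
  suffices key : ∀ {Θ}, MDerivNormal Ax Θ → ∀ Γ Δ, Θ = φ ::ₘ Γ →
      MDerivNormal Ax (φ ::ₘ Δ) → MDerivNormal Ax (Γ + Δ) by
    intro Γ Δ h1 h2; exact key h1 Γ Δ rfl h2
  intro Θ h
  induction h with
  | base hc =>
    intro Γ Δ hΘ h2
    exact hbase (hΘ ▸ hc) h2
  | conj hχ hξ ihχ ihξ =>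
    intro Γ Δ hΘ h2
    rcases Multiset.cons_eq_cons.1 hΘ with ⟨hf, rfl⟩ | ⟨-, u, hΓ₀, rfl⟩
    · exact hconj hf.symm hχ hξ h2
    · have a := ihχ _ Δ (by rw [hΓ₀, Multiset.cons_swap]) h2
      have b := ihξ _ Δ (by rw [hΓ₀, Multiset.cons_swap]) h2
      rw [Multiset.cons_add] at a b
      rw [Multiset.cons_add]
      exact .conj a b
  | equ hχ hξ ihχ ihξ =>
    intro Γ Δ hΘ h2
    rcases Multiset.cons_eq_cons.1 hΘ with ⟨hf, h12⟩ | ⟨-, u, h12, rfl⟩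
    · rw [← h12]; exact hequ hf.symm hχ hξ h2
    · rcases Multiset.mem_add.1
        (show φ ∈ _ by rw [h12]; exact Multiset.mem_cons_self _ _) with hm | hm
      · obtain ⟨v, rfl⟩ := Multiset.exists_cons_of_mem hm
        have hu : u = v + _ := (Multiset.cons_inj_right φ).1
          (by rw [← h12, Multiset.cons_add])
        have a := ihχ _ Δ (Multiset.cons_swap _ _ _) h2
        rw [Multiset.cons_add] at a
        exact normal_congr (MDerivNormal.equ a hξ)
          (by rw [hu, Multiset.cons_add]; congr 1; abel)
      · obtain ⟨v, rfl⟩ := Multiset.exists_cons_of_mem hm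
        have hu : u = _ + v := (Multiset.cons_inj_right φ).1
          (by rw [← h12, Multiset.add_cons])
        have a := ihξ _ Δ (Multiset.cons_swap _ _ _) h2
        rw [Multiset.cons_add] at a
        exact normal_congr (MDerivNormal.equ hχ a)
          (by rw [hu, Multiset.cons_add]; congr 1; abel)

lemma cut_normal (φ : MFormula W) : ∀ {Γ Δ}, MDerivNormal Ax (φ ::ₘ Γ) →
    MDerivNormal Ax (φ ::ₘ Δ) → MDerivNormal Ax (Γ + Δ) := by
  induction φ with
  | atom a =>
    refine cut_left _ (fun {Γ Δ} hc h2 => ?_) (fun hf => by cases hf) (fun hf => by cases hf)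
    refine cut_right _ Γ (fun hd => .base (hc.cut hd)) (fun hf => by cases hf)
      (fun hf => by cases hf) h2
  | conj α β ihα ihβ =>
    refine cut_left _ (fun {Γ Δ} hc _ => ?_) (fun {χ ξ Γ Δ} hf hχ hξ h2 => ?_)
      (fun hf => by cases hf)
    · obtain ⟨a, ha⟩ := cutonly_atoms hc _ (Multiset.mem_cons_self _ _)
      cases ha
    · cases hf
      refine cut_right _ Γ (fun hd => ?_) (fun {χ' ξ' Δ'} hf' hχ' hξ' => ?_)
        (fun hf' => by cases hf') h2
      · obtain ⟨a, ha⟩ := cutonly_atoms hd _ (Multiset.mem_cons_self _ _)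
        cases ha
      · cases hf'
        exact ihα hχ hχ'
  | equ α β ihα ihβ =>
    refine cut_left _ (fun {Γ Δ} hc _ => ?_) (fun hf => by cases hf)
      (fun {χ ξ Γ₁ Γ₂ Δ} hf hχ hξ h2 => ?_)
    · obtain ⟨a, ha⟩ := cutonly_atoms hc _ (Multiset.mem_cons_self _ _)
      cases ha
    · cases hf
      refine cut_right _ (Γ₁ + Γ₂) (fun hd => ?_) (fun hf' => by cases hf')
        (fun {χ' ξ' Δ₁ Δ₂} hf' hχ' hξ' => ?_) h2
      · obtain ⟨a, ha⟩ := cutonly_atoms hd _ (Multiset.mem_cons_self _ _)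
        cases ha
      · cases hf'
        have d := mix_normal (ihα hχ hχ') (ihβ hξ hξ')
        have : Γ₁ + Δ₁ + (Γ₂ + Δ₂) = Γ₁ + Γ₂ + (Δ₁ + Δ₂) := by
          simp only [add_assoc, add_left_comm]
        rwa [this] at d

end MenelausAux

/-- Every derivable sequent of the Menelaus system has a normal derivation. -/
theorem menelaus_normalisation {W : Type*}
    (Ax : Set (Multiset {f : Fin 6 → W // Function.Injective f}))
    (Γ : Multiset (MFormula W)) (h : MDeriv Ax Γ) :
    MDerivNormal Ax Γ := by
  induction h with
  | ax hΓ => exact .base (.ax hΓ)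
  | cut _ _ ih1 ih2 => exact MenelausAux.cut_normal _ ih1 ih2
  | mix _ _ ih1 ih2 => exact MenelausAux.mix_normal ih1 ih2
  | conj _ _ ih1 ih2 => exact .conj ih1 ih2
  | equ _ _ ih1 ih2 => exact .equ ih1 ih2
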